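/- If X₁, X₂ are independent Exponential(1) random variables and W := ln X₁ - ln X₂, then the characteristic function of W at any real z equals πz/sinh(πz) (interpreted as 1 at z = 0). -/

import Mathlib

open MeasureTheory ProbabilityTheory Real
open scoped NNReal ENNReal

lemma expMeasure_integral_exp_mul_log (c : ℂ) (hc : c.re = 0) :
    ∫ x : ℝ, Complex.exp (c * (Real.log x : ℂ)) ∂(expMeasure 1)
      = Complex.Gamma (1 + c) := by
  have h1 : (0:ℝ) < (1 + c).re := by simp [hc]
  rw [Complex.Gamma_eq_integral h1, Complex.GammaIntegral]
  set g : ℝ → ℂ := fun x => Complex.exp (c * (Real.log x : ℂ)) with hg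
  have hρ : expMeasure 1 = volume.withDensity (fun x => ((Real.toNNReal
      (if 0 ≤ x then Real.exp (-x) else 0) : ℝ≥0) : ℝ≥0∞)) := by
    rw [expMeasure, gammaMeasure]
    congr 1
    funext x
    rw [show gammaPDF 1 1 x = exponentialPDF 1 x from rfl, exponentialPDF_eq, ENNReal.ofReal]
    congr 1
    simp
  have hfm : Measurable (fun x => Real.toNNReal (if 0 ≤ x then Real.exp (-x) else 0)) := by
    apply Measurable.real_toNNReal
    exact Measurable.ite measurableSet_Ici (by fun_prop) measurable_const
  rw [hρ, integral_withDensity_eq_integral_smul hfm g]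
  have hind : (fun x => (Real.toNNReal (if 0 ≤ x then Real.exp (-x) else 0)) • g x)
      = Set.indicator (Set.Ici (0:ℝ)) (fun x => ((Real.exp (-x) : ℝ) : ℂ) * g x) := by
    funext x
    by_cases hx : 0 ≤ x
    · simp only [hx, if_true, Set.indicator_of_mem (Set.mem_Ici.mpr hx)]
      rw [NNReal.smul_def, Real.coe_toNNReal _ (Real.exp_nonneg _)]
      simp [Complex.real_smul]
    · rw [Set.indicator_of_notMem (by simp [Set.mem_Ici, hx])]
      simp [hx]
  rw [hind, integral_indicator measurableSet_Ici, integral_Ici_eq_integral_Ioi]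
  refine setIntegral_congr_fun measurableSet_Ioi fun x hx => ?_
  have hx' : (0:ℝ) < x := hx
  congr 1
  rw [add_sub_cancel_left, Complex.cpow_def_of_ne_zero (by exact_mod_cast hx'.ne')]
  rw [← Complex.ofReal_log hx'.le, mul_comm]

theorem charFun_log_ratio
    {Ω : Type*} [MeasurableSpace Ω] (μ : Measure Ω) [IsProbabilityMeasure μ]
    (X₁ X₂ : Ω → ℝ) (hX₁m : Measurable X₁) (hX₂m : Measurable X₂)
    (hindep : IndepFun X₁ X₂ μ)
    (hX₁ : Measure.map X₁ μ = expMeasure 1) (hX₂ : Measure.map X₂ μ = expMeasure 1)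
    (z : ℝ) :
    ∫ ω, Complex.exp (Complex.I * z * (Real.log (X₁ ω) - Real.log (X₂ ω))) ∂μ
      = if z = 0 then 1 else ((π * z / Real.sinh (π * z) : ℝ) : ℂ) := by
  by_cases hz : z = 0
  · simp [hz]
  rw [if_neg hz]
  set c : ℂ := Complex.I * z with hcdef
  have hcre : c.re = 0 := by simp [hcdef]
  have hcre' : (-c).re = 0 := by simp [hcre]
  set f₁ : ℝ → ℂ := fun x => Complex.exp (c * (Real.log x : ℂ)) with hf₁
  set f₂ : ℝ → ℂ := fun x => Complex.exp ((-c) * (Real.log x : ℂ)) with hf₂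
  have hf₁m : Measurable f₁ := by
    apply Complex.measurable_exp.comp
    exact measurable_const.mul (Complex.measurable_ofReal.comp Real.measurable_log)
  have hf₂m : Measurable f₂ := by
    apply Complex.measurable_exp.comp
    exact measurable_const.mul (Complex.measurable_ofReal.comp Real.measurable_log)
  have heq : ∀ ω, Complex.exp (Complex.I * z * (Real.log (X₁ ω) - Real.log (X₂ ω)))
      = f₁ (X₁ ω) * f₂ (X₂ ω) := by
    intro ω
    rw [hf₁, hf₂, ← Complex.exp_add]
    congr 1
    ring
  simp only [hcdef, heq]
  -- move to the product measure
  have hmap : Measure.map (fun ω => (X₁ ω, X₂ ω)) μ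
      = (Measure.map X₁ μ).prod (Measure.map X₂ μ) :=
    (indepFun_iff_map_prod_eq_prod_map_map hX₁m.aemeasurable hX₂m.aemeasurable).mp hindep
  have hFm : Measurable (fun p : ℝ × ℝ => f₁ p.1 * f₂ p.2) :=
    (hf₁m.comp measurable_fst).mul (hf₂m.comp measurable_snd)
  have hprob : IsProbabilityMeasure (expMeasure 1) := isProbabilityMeasure_expMeasure one_pos
  have key : ∫ ω, f₁ (X₁ ω) * f₂ (X₂ ω) ∂μ
      = (∫ x, f₁ x ∂(expMeasure 1)) * (∫ x, f₂ x ∂(expMeasure 1)) := by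
    have h := integral_map (μ := μ) ((hX₁m.prodMk hX₂m).aemeasurable)
      hFm.aestronglyMeasurable (f := fun p : ℝ × ℝ => f₁ p.1 * f₂ p.2)
    rw [hmap, hX₁, hX₂] at h
    rw [← h, integral_prod_mul f₁ f₂]
  rw [key, expMeasure_integral_exp_mul_log c hcre, expMeasure_integral_exp_mul_log (-c) hcre']
  -- now evaluate Γ(1+c) Γ(1-c)
  have hc0 : c ≠ 0 := by
    simp only [hcdef, mul_ne_zero_iff]
    exact ⟨Complex.I_ne_zero, by exact_mod_cast hz⟩
  have h1 : (1 : ℂ) + -c = 1 - c := by ring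
  have h2 : Complex.Gamma (1 + c) = c * Complex.Gamma c := by
    rw [add_comm]; exact Complex.Gamma_add_one c hc0
  rw [h1, h2, mul_assoc, Complex.Gamma_mul_Gamma_one_sub c]
  have hsin : Complex.sin (π * c) = (Real.sinh (π * z) : ℂ) * Complex.I := by
    have : (π : ℂ) * c = ((π * z : ℝ) : ℂ) * Complex.I := by
      push_cast [hcdef]; ring
    rw [this, Complex.sin_mul_I, Complex.ofReal_sinh]
  rw [hsin]
  have hsinh : Real.sinh (π * z) ≠ 0 := by
    rw [Real.sinh_ne_zero]
    exact mul_ne_zero Real.pi_ne_zero hz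
  have hsinh' : ((Real.sinh (π * z) : ℝ) : ℂ) ≠ 0 := by exact_mod_cast hsinh
  rw [hcdef]
  push_cast
  have hsinhC : Complex.sinh ((π : ℂ) * z) ≠ 0 := by
    rw [← Complex.ofReal_mul, ← Complex.ofReal_sinh]
    exact_mod_cast hsinh
  field_simp
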